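/- Let G be a connected finite simple graph on n ≥ 2 vertices with Kirchhoff (Laplacian) matrix K, whose eigenvalues are 0 = λ_1 ≤ λ_2 ≤ … ≤ λ_n. Then the pseudo determinant of K (the product of its nonzero eigenvalues, which equals ∏_{k=2}^n λ_k and counts the rooted spanning trees of G) satisfies ∏_{k=2}^n λ_k ≤ 2^n · ∏_{k=1}^n d_k, where d_1 ≤ … ≤ d_n are the vertex degrees of G in increasing order. -/

import Mathlib

open Matrix

section Aux

/-- AM-GM: nonneg reals with sum `n` have product at most `1`. -/
lemma amgm_prod_le_one {n : ℕ} (hn : 0 < n) (z : Fin n → ℝ)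
    (hz : ∀ i, 0 ≤ z i) (hsum : ∑ i, z i = (n : ℝ)) : ∏ i, z i ≤ 1 := by
  have hn' : (n : ℝ) ≠ 0 := Nat.cast_ne_zero.mpr hn.ne'
  have h := Real.geom_mean_le_arith_mean_weighted Finset.univ
    (fun _ => 1 / (n : ℝ)) z (fun _ _ => by positivity)
    (by simp [Finset.sum_const, Finset.card_univ]; field_simp) (fun i _ => hz i)
  have hsum' : ∑ i, (1 / (n : ℝ)) * z i = 1 := by
    rw [← Finset.mul_sum, hsum]; field_simp
  rw [hsum'] at h
  have hkey : ∏ i, z i = (∏ i, z i ^ (1 / (n : ℝ))) ^ (n : ℕ) := by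
    rw [← Finset.prod_pow]
    refine Finset.prod_congr rfl fun i _ => ?_
    rw [← Real.rpow_natCast (z i ^ (1 / (n:ℝ))) n, ← Real.rpow_mul (hz i)]
    rw [one_div, inv_mul_cancel₀ hn', Real.rpow_one]
  rw [hkey]
  calc (∏ i, z i ^ (1 / (n : ℝ))) ^ (n:ℕ) ≤ 1 ^ (n:ℕ) := by
        apply pow_le_pow_left₀ _ h
        exact Finset.prod_nonneg fun i _ => Real.rpow_nonneg (hz i) _
    _ = 1 := one_pow n

/-- Sum of eigenvalues of a real symmetric matrix is the trace. -/
lemma sum_eigenvalues_eq_trace' {n : ℕ} {A : Matrix (Fin n) (Fin n) ℝ}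
    (hA : A.IsHermitian) : ∑ i, hA.eigenvalues i = A.trace := by
  conv_rhs => rw [hA.spectral_theorem]
  rw [Unitary.conjStarAlgAut_apply, Matrix.trace_mul_cycle, Unitary.coe_star_mul_self, Matrix.one_mul, Matrix.trace_diagonal]
  simp

/-- Hadamard's inequality for positive semidefinite real matrices with positive
diagonal. -/
lemma psd_det_le_prod_diag {n : ℕ} (hn : 0 < n) {M : Matrix (Fin n) (Fin n) ℝ}
    (hM : M.PosSemidef) (hd : ∀ i, 0 < M i i) : M.det ≤ ∏ i, M i i := by
  classical
  set c : Fin n → ℝ := fun i => (Real.sqrt (M i i))⁻¹ with hc_def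
  have hc : ∀ i, 0 < c i := fun i => inv_pos.2 (Real.sqrt_pos.2 (hd i))
  have hc2 : ∀ i, c i ^ 2 = (M i i)⁻¹ := fun i => by
    show ((Real.sqrt (M i i))⁻¹) ^ 2 = (M i i)⁻¹
    rw [inv_pow, Real.sq_sqrt (hd i).le]
  set D : Matrix (Fin n) (Fin n) ℝ := Matrix.diagonal c with hD_def
  have hDH : Dᴴ = D := by
    simp [hD_def, Matrix.diagonal_conjTranspose]
  have hN : (D * M * Dᴴ).PosSemidef := hM.mul_mul_conjTranspose_same D
  rw [hDH] at hN
  set N : Matrix (Fin n) (Fin n) ℝ := D * M * D with hN_def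
  have hNdiag : ∀ i, N i i = 1 := by
    intro i
    have : N i i = c i * M i i * c i := by
      rw [hN_def, hD_def, Matrix.mul_apply]
      simp [Matrix.diagonal_mul, Matrix.mul_diagonal, Matrix.diagonal_apply, Finset.sum_ite_eq',
        Matrix.mul_apply]
    rw [this]
    calc c i * M i i * c i = c i ^ 2 * M i i := by ring
      _ = 1 := by rw [hc2 i]; exact inv_mul_cancel₀ (hd i).ne'
  have htrace : N.trace = (n : ℝ) := by
    simp only [Matrix.trace, Matrix.diag]
    simp [hNdiag]
  have hsum : ∑ i, hN.isHermitian.eigenvalues i = (n : ℝ) := by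
    rw [sum_eigenvalues_eq_trace' hN.isHermitian, htrace]
  have hdetN : N.det ≤ 1 := by
    have := hN.isHermitian.det_eq_prod_eigenvalues
    rw [this]
    exact amgm_prod_le_one hn _ (fun i => hN.eigenvalues_nonneg i) hsum
  have hdetN' : N.det = (∏ i, c i) ^ 2 * M.det := by
    rw [hN_def, Matrix.det_mul, Matrix.det_mul, hD_def, Matrix.det_diagonal]
    ring
  have hprodc : (∏ i, c i) ^ 2 = (∏ i, M i i)⁻¹ := by
    rw [← Finset.prod_pow, ← Finset.prod_inv_distrib]
    exact Finset.prod_congr rfl fun i _ => hc2 i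
  have hP : 0 < ∏ i, M i i := Finset.prod_pos fun i _ => hd i
  rw [hdetN', hprodc] at hdetN
  calc M.det = (∏ i, M i i) * ((∏ i, M i i)⁻¹ * M.det) := by
        field_simp
    _ ≤ (∏ i, M i i) * 1 := by
        exact mul_le_mul_of_nonneg_left hdetN hP.le
    _ = ∏ i, M i i := mul_one _

end Aux

/-- For a connected finite simple graph on `n ≥ 2` vertices, the pseudo
determinant of the Kirchhoff matrix (the product `∏_{k=2}^n λ_k` of its
nonzero eigenvalues, counting rooted spanning trees) is at most
`2^n · ∏_k d_k`. -/
theorem graph_pseudo_det_upper_bound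
    (n : ℕ) (hn : 2 ≤ n) (G : SimpleGraph (Fin n)) [DecidableRel G.Adj]
    (hconn : G.Connected)
    (hK : (G.lapMatrix ℝ).IsHermitian)
    (lam : Fin n → ℝ)
    (hlam : lam = hK.eigenvalues ∘ Tuple.sort hK.eigenvalues) :
    ∏ k ∈ Finset.univ.erase (⟨0, by omega⟩ : Fin n), lam k ≤
      2 ^ n * ∏ v : Fin n, (G.degree v : ℝ) := by
  classical
  have hn0 : 0 < n := by omega
  have hnR : (0:ℝ) < n := by exact_mod_cast hn0
  set K : Matrix (Fin n) (Fin n) ℝ := G.lapMatrix ℝ with hK_def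
  have hPSD : K.PosSemidef := SimpleGraph.posSemidef_lapMatrix ℝ G
  set μ : Fin n → ℝ := hK.eigenvalues with hμ_def
  set σ : Equiv.Perm (Fin n) := Tuple.sort hK.eigenvalues with hσ_def
  set i0 : Fin n := (⟨0, by omega⟩ : Fin n) with hi0_def
  set k0 : Fin n := σ i0 with hk0_def
  have hμnonneg : ∀ i, 0 ≤ μ i := fun i => hPSD.eigenvalues_nonneg i
  -- the all-ones vector is in the kernel
  set e : Fin n → ℝ := fun _ => (1:ℝ) with he_def
  have hKe : K *ᵥ e = 0 := SimpleGraph.lapMatrix_mulVec_const_eq_zero G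
  have he0 : e ≠ 0 := by
    intro h
    have := congrFun h i0
    simp [he_def] at this
  -- determinant is zero, hence some eigenvalue is zero
  have hdet : K.det = 0 := Matrix.exists_mulVec_eq_zero_iff.mp ⟨e, he0, hKe⟩
  have hexists : ∃ j, μ j = 0 := by
    have := hK.det_eq_prod_eigenvalues
    rw [hdet] at this
    have h0 : ∏ i, μ i = 0 := by exact_mod_cast this.symm
    obtain ⟨j, _, hj⟩ := Finset.prod_eq_zero_iff.mp h0
    exact ⟨j, hj⟩
  -- the smallest (sorted) eigenvalue is zero
  have hμk0 : μ k0 = 0 := by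
    obtain ⟨j, hj⟩ := hexists
    have hmono := Tuple.monotone_sort hK.eigenvalues
    have h1 : μ k0 ≤ μ j := by
      have : (hK.eigenvalues ∘ σ) i0 ≤ (hK.eigenvalues ∘ σ) (σ.symm j) := by
        apply hmono
        rw [Fin.le_def]
        exact Nat.zero_le _
      simpa [hk0_def] using this
    rw [hj] at h1
    exact le_antisymm h1 (hμnonneg k0)
  -- the kernel has dimension 1
  have hccard : Fintype.card G.ConnectedComponent = 1 := by
    rw [Fintype.card_eq_one_iff]
    refine ⟨G.connectedComponentMk i0, ?_⟩
    intro c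
    induction c using SimpleGraph.ConnectedComponent.ind with
    | _ v => exact SimpleGraph.ConnectedComponent.eq.mpr (hconn.preconnected v i0)
  have hker1 : Module.finrank ℝ (LinearMap.ker (Matrix.toLin' K)) = 1 := by
    rw [← SimpleGraph.card_connectedComponent_eq_finrank_ker_toLin'_lapMatrix, hccard]
  -- eigenvalue 0 has multiplicity one
  have hrank : K.rank = Fintype.card {i // μ i ≠ 0} := hK.rank_eq_card_non_zero_eigs
  have hranknul : K.rank + Module.finrank ℝ (LinearMap.ker (Matrix.toLin' K)) = n := by
    have h := LinearMap.finrank_range_add_finrank_ker (Matrix.toLin' K)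
    rw [Matrix.toLin'_apply'] at h ⊢
    have : K.rank = Module.finrank ℝ (LinearMap.range K.mulVecLin) := rfl
    rw [this]
    simpa [Module.finrank_fintype_fun_eq_card] using h
  have hcard_ne : Fintype.card {i // μ i ≠ 0} = n - 1 := by omega
  have hcard_eq : Fintype.card {i // μ i = 0} = 1 := by
    have h := Fintype.card_subtype_compl (fun i => μ i = 0)
    have h2 : Fintype.card {i // ¬ μ i = 0} = n - 1 := hcard_ne
    rw [h2, Fintype.card_fin] at h
    have h3 : Fintype.card {i // μ i = 0} ≥ 1 :=
      Fintype.card_pos_iff.mpr ⟨⟨k0, hμk0⟩⟩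
    have h4 : Fintype.card {i // μ i = 0} ≤ n := by
      simpa using Fintype.card_subtype_le (fun i => μ i = 0)
    omega
  have huniq : ∀ j, μ j = 0 → j = k0 := by
    intro j hj
    obtain ⟨a, ha⟩ := Fintype.card_eq_one_iff.mp hcard_eq
    have h1 := ha ⟨j, hj⟩
    have h2 := ha ⟨k0, hμk0⟩
    have : (⟨j, hj⟩ : {i // μ i = 0}) = ⟨k0, hμk0⟩ := by rw [h1, h2]
    exact congrArg Subtype.val this
  -- eigenvectors
  set v : Fin n → (Fin n → ℝ) := fun j => ⇑(hK.eigenvectorBasis j) with hv_def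
  have hKv : ∀ j, K *ᵥ v j = μ j • v j := fun j => hK.mulVec_eigenvectorBasis j
  -- for j ≠ k0, the eigenvector is orthogonal to e
  have hdot : ∀ j, j ≠ k0 → e ⬝ᵥ v j = 0 := by
    intro j hj
    have hμj : μ j ≠ 0 := fun h => hj (huniq j h)
    have h1 : e ⬝ᵥ (K *ᵥ v j) = μ j * (e ⬝ᵥ v j) := by
      rw [hKv j, dotProduct_smul]
      simp [smul_eq_mul]
    have h2 : e ⬝ᵥ (K *ᵥ v j) = 0 := by
      rw [Matrix.dotProduct_mulVec, ← Matrix.mulVec_transpose]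
      have hKT : Kᵀ = K := hK
      rw [hKT, hKe]
      simp
    rw [h2] at h1
    exact (mul_eq_zero.mp h1.symm).resolve_left hμj
  -- the eigenvector for eigenvalue 0 is a multiple of e
  have hvk0 : ∃ c : ℝ, v k0 = c • e := by
    have heker : e ∈ LinearMap.ker (Matrix.toLin' K) := by
      rw [LinearMap.mem_ker, Matrix.toLin'_apply, hKe]
    have hvker : v k0 ∈ LinearMap.ker (Matrix.toLin' K) := by
      rw [LinearMap.mem_ker, Matrix.toLin'_apply, hKv k0, hμk0, zero_smul]
    have he0' : (⟨e, heker⟩ : LinearMap.ker (Matrix.toLin' K)) ≠ 0 := by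
      intro h
      apply he0
      exact congrArg Subtype.val h
    have := (finrank_eq_one_iff_of_nonzero' (⟨e, heker⟩ : LinearMap.ker (Matrix.toLin' K))
      he0').mp hker1 ⟨v k0, hvker⟩
    obtain ⟨c, hc⟩ := this
    refine ⟨c, ?_⟩
    have := congrArg Subtype.val hc
    simpa [eq_comm] using this.symm
  -- the matrix M = K + (1/n) J
  set J : Matrix (Fin n) (Fin n) ℝ := Matrix.of (fun _ _ => (1:ℝ)/n) with hJ_def
  set M : Matrix (Fin n) (Fin n) ℝ := K + J with hM_def
  have hnne : (n:ℝ) ≠ 0 := hnR.ne'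
  have hJe : J *ᵥ e = e := by
    funext i
    show ∑ k, (1/(n:ℝ)) * e k = e i
    rw [show ∑ k, (1/(n:ℝ)) * e k = ∑ _k : Fin n, (1/(n:ℝ)) from
      Finset.sum_congr rfl (fun k _ => mul_one _)]
    rw [Finset.sum_const, Finset.card_univ, Fintype.card_fin, nsmul_eq_mul]
    show (n:ℝ) * (1/(n:ℝ)) = 1
    rw [mul_one_div, div_self hnne]
  have hJx : ∀ x : Fin n → ℝ, e ⬝ᵥ x = 0 → J *ᵥ x = 0 := by
    intro x hx
    funext i
    simp only [hJ_def, Matrix.mulVec, dotProduct, Matrix.of_apply, Pi.zero_apply]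
    have : ∑ k, x k = 0 := by simpa [dotProduct, he_def] using hx
    rw [← Finset.mul_sum, this, mul_zero]
  -- eigen-equation for M
  set ν : Fin n → ℝ := fun j => if j = k0 then 1 else μ j with hν_def
  have hMv : ∀ j, M *ᵥ v j = ν j • v j := by
    intro j
    by_cases hj : j = k0
    · subst hj
      obtain ⟨c, hc⟩ := hvk0
      have hJv : J *ᵥ v k0 = v k0 := by
        rw [hc, Matrix.mulVec_smul, hJe]
      rw [hM_def, Matrix.add_mulVec, hKv k0, hμk0, zero_smul, zero_add, hJv, hν_def]
      simp
    · have hJv : J *ᵥ v j = 0 := hJx (v j) (hdot j hj)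
      rw [hM_def, Matrix.add_mulVec, hKv j, hJv, add_zero, hν_def]
      simp [hj]
  -- diagonalize M
  have hdetM : M.det = ∏ j, ν j := by
    set U : Matrix (Fin n) (Fin n) ℝ := (hK.eigenvectorUnitary : Matrix (Fin n) (Fin n) ℝ)
      with hU_def
    have hMU : M * U = U * Matrix.diagonal ν := by
      ext i j
      have hcol : (fun k => U k j) = v j := by
        funext k
        simp [hU_def, hv_def, Matrix.IsHermitian.eigenvectorUnitary_apply]
      have h1 : (M * U) i j = (M *ᵥ v j) i := by
        rw [Matrix.mul_apply, ← hcol]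
        simp [Matrix.mulVec, dotProduct]
      rw [h1, hMv j, Matrix.mul_diagonal]
      have hvij : v j i = U i j := by rw [← hcol]
      simp only [Pi.smul_apply, smul_eq_mul, hvij]
      ring
    have hUdet : U.det ≠ 0 := by
      have h := Matrix.mem_unitaryGroup_iff.mp hK.eigenvectorUnitary.2
      have := congrArg Matrix.det h
      rw [Matrix.det_mul, Matrix.det_one] at this
      intro h0
      rw [h0, zero_mul] at this
      exact zero_ne_one this
    have := congrArg Matrix.det hMU
    rw [Matrix.det_mul, Matrix.det_mul, Matrix.det_diagonal] at this
    have h2 : M.det * U.det = (∏ j, ν j) * U.det := by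
      rw [this]; ring
    exact mul_right_cancel₀ hUdet h2
  -- identify the target product with det M
  have htarget : ∏ k ∈ Finset.univ.erase i0, lam k = M.det := by
    rw [hdetM]
    have h1 : ∏ j, ν j = ν k0 * ∏ j ∈ Finset.univ.erase k0, ν j :=
      (Finset.mul_prod_erase Finset.univ ν (Finset.mem_univ k0)).symm
    have h2 : ν k0 = 1 := by simp [hν_def]
    have h3 : ∏ j ∈ Finset.univ.erase k0, ν j = ∏ j ∈ Finset.univ.erase k0, μ j := by
      refine Finset.prod_congr rfl fun j hj => ?_
      have : j ≠ k0 := (Finset.mem_erase.mp hj).1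
      simp [hν_def, this]
    have h4 : ∏ k ∈ Finset.univ.erase i0, lam k = ∏ j ∈ Finset.univ.erase k0, μ j := by
      rw [hlam]
      simp only [Function.comp_apply]
      rw [← Finset.prod_image (f := μ) (g := ⇑σ) (fun a _ b _ hab => σ.injective hab)]
      congr 1
      ext j
      simp only [Finset.mem_image, Finset.mem_erase, Finset.mem_univ, and_true]
      constructor
      · rintro ⟨a, ha, rfl⟩
        exact fun h => ha (σ.injective h)
      · intro hj
        exact ⟨σ.symm j, fun h => hj (by rw [hk0_def, ← h, Equiv.apply_symm_apply]), by simp⟩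
    rw [h4, h1, h2, h3, one_mul]
  -- M is positive semidefinite
  have hJPSD : J.PosSemidef := by
    rw [Matrix.posSemidef_iff_dotProduct_mulVec]
    constructor
    · unfold Matrix.IsHermitian
      ext i j
      simp [hJ_def]
    · intro x
      have : dotProduct (star x) (J *ᵥ x) = (1/n) * (∑ i, x i)^2 := by
        calc dotProduct (star x) (J *ᵥ x)
            = ∑ i, x i * ∑ k, (1/(n:ℝ)) * x k := by
              simp [dotProduct, Matrix.mulVec, hJ_def]
          _ = (1/n) * (∑ i, x i)^2 := by
              rw [← Finset.mul_sum, ← Finset.sum_mul]; ring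
      rw [this]
      positivity
  have hMPSD : M.PosSemidef := hPSD.add hJPSD
  -- diagonal entries of M
  have hdeg : ∀ i : Fin n, 1 ≤ (G.degree i : ℝ) := by
    intro i
    have : 0 < G.degree i := by
      rw [SimpleGraph.degree_pos_iff_exists_adj]
      have hne : ∃ w : Fin n, w ≠ i := by
        by_cases h : i = i0
        · exact ⟨⟨1, by omega⟩, by simp [h, hi0_def, Fin.ext_iff]⟩
        · exact ⟨i0, fun hh => h hh.symm⟩
      obtain ⟨w, hw⟩ := hne
      obtain ⟨p⟩ := hconn.preconnected i w
      cases p with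
      | nil => exact absurd rfl hw.symm
      | cons h _ => exact ⟨_, h⟩
    exact_mod_cast this
  have hMdiag : ∀ i, M i i = (G.degree i : ℝ) + 1/n := by
    intro i
    simp [hM_def, hK_def, hJ_def, SimpleGraph.lapMatrix, SimpleGraph.degMatrix,
      Matrix.diagonal_apply_eq]
  have hMdiagpos : ∀ i, 0 < M i i := by
    intro i
    rw [hMdiag i]
    have := hdeg i
    positivity
  -- Hadamard
  have hHad : M.det ≤ ∏ i, M i i := psd_det_le_prod_diag hn0 hMPSD hMdiagpos
  -- final bound
  have hfinal : ∏ i, M i i ≤ 2 ^ n * ∏ v : Fin n, (G.degree v : ℝ) := by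
    have h1 : ∏ i, M i i ≤ ∏ i, 2 * (G.degree i : ℝ) := by
      apply Finset.prod_le_prod
      · intro i _
        exact (hMdiagpos i).le
      · intro i _
        rw [hMdiag i]
        have h2 := hdeg i
        have h3 : 1/(n:ℝ) ≤ 1 := by
          rw [div_le_one hnR]
          exact_mod_cast hn0
        linarith
    calc ∏ i, M i i ≤ ∏ i, 2 * (G.degree i : ℝ) := h1
      _ = 2 ^ n * ∏ v : Fin n, (G.degree v : ℝ) := by
          rw [Finset.prod_mul_distrib, Finset.prod_const, Finset.card_univ, Fintype.card_fin]
  rw [htarget]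
  exact le_trans hHad hfinal
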